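/- Iterated-derivative partial fraction identity: Let z, a, b be real numbers with z ≠ a·b/2, and let k, l be natural numbers. Then (2^{k+l}/(k!·l!)) · iteratedDeriv k (fun a' => iteratedDeriv l (fun b' => (z − a'·b'/2)⁻¹) b) a = ∑_{j=0}^{min(k,l)} 2^j · a^{l−j} · b^{k−j} · (z − a·b/2)^{−(k+l−j+1)} · (k+l−j)! / ((k−j)!·(l−j)!·j!). -/

import Mathlib

open Finset

private lemma iter_const_mul (K : ℝ) (f : ℝ → ℝ) (n : ℕ) (x : ℝ) :
    iteratedDeriv n (fun y => K * f y) x = K * iteratedDeriv n f x := by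
  induction n generalizing f with
  | zero => simp
  | succ n ih =>
    rw [iteratedDeriv_succ', iteratedDeriv_succ']
    have h : deriv (fun y => K * f y) = fun y => K * deriv f y :=
      funext fun y => deriv_const_mul_field K
    rw [h]; exact ih _

private lemma isOpen_ne_aux (z c : ℝ) : IsOpen {y : ℝ | z - c * y ≠ 0} := by
  have : Continuous fun y : ℝ => z - c * y := by continuity
  exact isOpen_compl_singleton.preimage this

private lemma hasDerivAt_invpow (z c : ℝ) (p : ℕ) (x : ℝ) (h : z - c * x ≠ 0) :
    HasDerivAt (fun y : ℝ => ((z - c * y) ^ p)⁻¹) ((p : ℝ) * c * ((z - c * x) ^ (p + 1))⁻¹) x := by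
  have h2 : HasDerivAt (fun y : ℝ => z - c * y) (-c) x := by
    simpa using ((hasDerivAt_id x).const_mul c).const_sub z
  have h3 := (h2.fun_pow p).fun_inv (pow_ne_zero p h)
  refine h3.congr_deriv ?_
  rcases p with _ | q
  · simp
  · have hq : z - c * x ≠ 0 := h
    simp only [Nat.add_sub_cancel]
    field_simp
    ring

private lemma inner_deriv (z c : ℝ) (l : ℕ) :
    ∀ t : ℝ, z - c * t ≠ 0 →
      iteratedDeriv l (fun y : ℝ => (z - c * y)⁻¹) t
        = (l.factorial : ℝ) * c ^ l * ((z - c * t) ^ (l + 1))⁻¹ := by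
  induction l with
  | zero => intro t ht; simp
  | succ l ih =>
    intro t ht
    rw [iteratedDeriv_succ]
    have hev : iteratedDeriv l (fun y : ℝ => (z - c * y)⁻¹)
        =ᶠ[nhds t] fun y => (l.factorial : ℝ) * c ^ l * ((z - c * y) ^ (l + 1))⁻¹ :=
      Filter.eventuallyEq_of_mem ((isOpen_ne_aux z c).mem_nhds ht) (fun y hy => ih y hy)
    rw [hev.deriv_eq]
    have hd : HasDerivAt (fun y : ℝ => (l.factorial : ℝ) * c ^ l * ((z - c * y) ^ (l + 1))⁻¹)
        ((l.factorial : ℝ) * c ^ l * (((l + 1 : ℕ) : ℝ) * c * ((z - c * t) ^ (l + 2))⁻¹)) t := by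
      simpa [mul_assoc] using (hasDerivAt_invpow z c (l + 1) t ht).const_mul
        ((l.factorial : ℝ) * c ^ l)
    rw [hd.deriv]
    rw [Nat.factorial_succ]
    push_cast
    field_simp
    ring

private def Bco (l k j : ℕ) : ℕ := k.choose j * l.descFactorial j * (k + l - j).factorial

private lemma Bco_rec (l k i : ℕ) :
    Bco l (k + 1) (i + 1) = (k + l - i) * Bco l k (i + 1) + (l - i) * Bco l k i := by
  unfold Bco
  rw [Nat.choose_succ_succ, Nat.descFactorial_succ]
  have h1 : k + 1 + l - (i + 1) = k + l - i := by omega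
  rw [h1]
  rcases le_or_gt (i + 1) k with hik | hik
  · have h2 : k + l - i = (k + l - (i + 1)) + 1 := by omega
    rw [h2, Nat.factorial_succ]
    ring
  · rw [Nat.choose_eq_zero_of_lt hik]
    ring

private lemma Bco_zero_right (l k : ℕ) : Bco l k (k + 1) = 0 := by
  unfold Bco; rw [Nat.choose_succ_self]; ring

private lemma outer_deriv (z c : ℝ) (l : ℕ) :
    ∀ (k : ℕ) (x : ℝ), z - c * x ≠ 0 →
      (l.factorial : ℝ) * iteratedDeriv k (fun y : ℝ => y ^ l * ((z - c * y) ^ (l + 1))⁻¹) x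
        = ∑ j ∈ range (k + 1),
            (Bco l k j : ℝ) * x ^ (l - j) * c ^ (k - j) * ((z - c * x) ^ (k + l - j + 1))⁻¹ := by
  have hl : (l.factorial : ℝ) ≠ 0 := Nat.cast_ne_zero.2 l.factorial_ne_zero
  intro k
  induction k with
  | zero =>
    intro x hx
    simp [Bco]
    ring
  | succ k ih =>
    intro x hx
    rw [iteratedDeriv_succ]
    have hev : iteratedDeriv k (fun y : ℝ => y ^ l * ((z - c * y) ^ (l + 1))⁻¹)
        =ᶠ[nhds x] fun y => (l.factorial : ℝ)⁻¹ * ∑ j ∈ range (k + 1),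
            (Bco l k j : ℝ) * y ^ (l - j) * c ^ (k - j) * ((z - c * y) ^ (k + l - j + 1))⁻¹ := by
      refine Filter.eventuallyEq_of_mem ((isOpen_ne_aux z c).mem_nhds hx) (fun y hy => ?_)
      rw [← ih y hy, inv_mul_cancel_left₀ hl]
    rw [hev.deriv_eq, deriv_const_mul_field, ← mul_assoc, mul_inv_cancel₀ hl, one_mul]
    have hS : HasDerivAt (fun y => ∑ j ∈ range (k + 1),
          (Bco l k j : ℝ) * y ^ (l - j) * c ^ (k - j) * ((z - c * y) ^ (k + l - j + 1))⁻¹)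
        (∑ j ∈ range (k + 1),
          (((Bco l k j : ℝ) * (((l - j : ℕ) : ℝ) * x ^ (l - j - 1)) * c ^ (k - j))
              * ((z - c * x) ^ (k + l - j + 1))⁻¹
            + ((Bco l k j : ℝ) * x ^ (l - j) * c ^ (k - j))
              * (((k + l - j + 1 : ℕ) : ℝ) * c * ((z - c * x) ^ (k + l - j + 1 + 1))⁻¹))) x := by
      apply HasDerivAt.fun_sum
      intro j hj
      exact (((hasDerivAt_pow (l - j) x).const_mul ((Bco l k j : ℝ))).mul_const (c ^ (k - j))).mul
        (hasDerivAt_invpow z c (k + l - j + 1) x hx)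
    rw [hS.deriv]
    -- canonical form
    set P : ℕ → ℝ := fun j => x ^ (l - j) * c ^ (k + 1 - j) * ((z - c * x) ^ (k + l - j + 2))⁻¹
      with hP
    have key1 : ∀ j ∈ range (k + 1),
        (((Bco l k j : ℝ) * (((l - j : ℕ) : ℝ) * x ^ (l - j - 1)) * c ^ (k - j))
              * ((z - c * x) ^ (k + l - j + 1))⁻¹
            + ((Bco l k j : ℝ) * x ^ (l - j) * c ^ (k - j))
              * (((k + l - j + 1 : ℕ) : ℝ) * c * ((z - c * x) ^ (k + l - j + 1 + 1))⁻¹))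
          = ((l - j : ℕ) : ℝ) * (Bco l k j : ℝ) * P (j + 1)
            + ((k + l - j + 1 : ℕ) : ℝ) * (Bco l k j : ℝ) * P j := by
      intro j hj
      rw [mem_range] at hj
      have hjk : j ≤ k := by omega
      rcases lt_or_ge j l with hjl | hjl
      · have e1 : l - (j + 1) = l - j - 1 := by omega
        have e2 : k + 1 - (j + 1) = k - j := by omega
        have e3 : k + l - (j + 1) + 2 = k + l - j + 1 := by omega
        have e5 : k + 1 - j = (k - j) + 1 := by omega
        simp only [hP, e1, e2, e3, e5]
        ring
      · have e0 : l - j = 0 := by omega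
        have e5 : k + 1 - j = (k - j) + 1 := by omega
        simp only [hP, e0, e5, Nat.cast_zero]
        ring
    rw [Finset.sum_congr rfl key1, Finset.sum_add_distrib]
    -- right-hand side
    have key2 : ∀ j ∈ range (k + 1 + 1),
        (Bco l (k + 1) j : ℝ) * x ^ (l - j) * c ^ (k + 1 - j)
            * ((z - c * x) ^ (k + 1 + l - j + 1))⁻¹
          = (Bco l (k + 1) j : ℝ) * P j := by
      intro j hj
      rw [mem_range] at hj
      rcases le_or_gt j (k + l) with hjl | hjl
      · have e : k + 1 + l - j + 1 = k + l - j + 2 := by omega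
        rw [e, hP]
        ring
      · have hb : Bco l (k + 1) j = 0 := by
          unfold Bco
          rw [Nat.descFactorial_eq_zero_iff_lt.2 (by omega : l < j)]
          ring
        rw [hb]
        simp
    rw [Finset.sum_congr rfl key2]
    conv_rhs => rw [Finset.sum_range_succ']
    have key3 : ∀ i ∈ range (k + 1),
        (Bco l (k + 1) (i + 1) : ℝ) * P (i + 1)
          = ((k + l - i : ℕ) : ℝ) * (Bco l k (i + 1) : ℝ) * P (i + 1)
            + ((l - i : ℕ) : ℝ) * (Bco l k i : ℝ) * P (i + 1) := by
      intro i _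
      rw [Bco_rec]
      push_cast
      ring
    rw [Finset.sum_congr rfl key3, Finset.sum_add_distrib]
    -- now match the three pieces
    have m1 : ∑ i ∈ range (k + 1), ((k + l - i + 1 : ℕ) : ℝ) * (Bco l k i : ℝ) * P i
        = (∑ i ∈ range (k + 1), ((k + l - i : ℕ) : ℝ) * (Bco l k (i + 1) : ℝ) * P (i + 1))
          + (Bco l (k + 1) 0 : ℝ) * P 0 := by
      rw [Finset.sum_range_succ' (fun i => ((k + l - i + 1 : ℕ) : ℝ) * (Bco l k i : ℝ) * P i) k,
        Finset.sum_range_succ]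
      have hlast : (Bco l k (k + 1) : ℝ) = 0 := by rw [Bco_zero_right]; simp
      rw [hlast]
      have hz : (Bco l (k + 1) 0 : ℝ) = ((k + l - 0 + 1 : ℕ) : ℝ) * (Bco l k 0 : ℝ) := by
        unfold Bco
        simp only [Nat.choose_zero_right, Nat.descFactorial_zero, Nat.sub_zero, one_mul, mul_one]
        have : k + 1 + l = (k + l) + 1 := by omega
        rw [this, Nat.factorial_succ]
        push_cast
        ring
      rw [hz]
      have hcong : ∀ i ∈ range k,
          ((k + l - (i + 1) + 1 : ℕ) : ℝ) * (Bco l k (i + 1) : ℝ) * P (i + 1)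
            = ((k + l - i : ℕ) : ℝ) * (Bco l k (i + 1) : ℝ) * P (i + 1) := by
        intro i hi
        rw [mem_range] at hi
        have : k + l - (i + 1) + 1 = k + l - i := by omega
        rw [this]
      rw [Finset.sum_congr rfl hcong]
      ring
    rw [m1]
    ring


set_option maxHeartbeats 1600000 in
/-- Iterated-derivative partial fraction identity: for reals `z, a, b` with `z ≠ a·b/2`
and naturals `k, l`,
`(2^{k+l}/(k!·l!)) · ∂_a^k ∂_b^l (z − a·b/2)⁻¹
  = ∑_{j=0}^{min(k,l)} 2^j · a^{l−j} · b^{k−j} · (z − a·b/2)^{−(k+l−j+1)}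
      · (k+l−j)! / ((k−j)!·(l−j)!·j!)`. -/
theorem iterated_deriv_partial_fraction (z a b : ℝ) (hz : z ≠ a * b / 2) (k l : ℕ) :
    ((2 : ℝ) ^ (k + l) / ((k.factorial : ℝ) * (l.factorial : ℝ))) *
        iteratedDeriv k (fun a' : ℝ => iteratedDeriv l (fun b' : ℝ => (z - a' * b' / 2)⁻¹) b) a =
      ∑ j ∈ Finset.range (min k l + 1),
        (2 : ℝ) ^ j * a ^ (l - j) * b ^ (k - j) * ((z - a * b / 2) ^ (k + l - j + 1))⁻¹ *
          ((k + l - j).factorial : ℝ) /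
          (((k - j).factorial : ℝ) * ((l - j).factorial : ℝ) * (j.factorial : ℝ)) := by
  have hl : (l.factorial : ℝ) ≠ 0 := Nat.cast_ne_zero.2 l.factorial_ne_zero
  have hza : z - b / 2 * a ≠ 0 := by
    intro h
    exact hz (by rw [sub_eq_zero] at h; rw [h]; ring)
  have hev : (fun a' : ℝ => iteratedDeriv l (fun b' : ℝ => (z - a' * b' / 2)⁻¹) b)
      =ᶠ[nhds a] fun y => ((l.factorial : ℝ) * (1 / 2) ^ l)
        * (y ^ l * ((z - b / 2 * y) ^ (l + 1))⁻¹) := by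
    refine Filter.eventuallyEq_of_mem ((isOpen_ne_aux z (b / 2)).mem_nhds hza) (fun y hy => ?_)
    have h1 : (fun b' : ℝ => (z - y * b' / 2)⁻¹) = fun b' => (z - y / 2 * b')⁻¹ := by
      funext b'
      norm_num
      ring_nf
    rw [h1, inner_deriv z (y / 2) l b (by
      have : z - y / 2 * b = z - b / 2 * y := by ring
      rw [this]; exact hy)]
    have h2 : z - y / 2 * b = z - b / 2 * y := by ring
    rw [h2]
    ring
  rw [hev.iteratedDeriv_eq k, iter_const_mul]
  have hout := outer_deriv z (b / 2) l k a hza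
  have hitd : iteratedDeriv k (fun y : ℝ => y ^ l * ((z - b / 2 * y) ^ (l + 1))⁻¹) a
      = (l.factorial : ℝ)⁻¹ * ∑ j ∈ range (k + 1),
          (Bco l k j : ℝ) * a ^ (l - j) * (b / 2) ^ (k - j)
            * ((z - b / 2 * a) ^ (k + l - j + 1))⁻¹ := by
    rw [← hout, inv_mul_cancel_left₀ hl]
  rw [hitd, ← mul_assoc, ← mul_assoc, Finset.mul_sum]
  have hsub : range (min k l + 1) ⊆ range (k + 1) := by
    apply Finset.range_subset_range.mpr; omega
  have hzero : ∀ j ∈ range (k + 1), j ∉ range (min k l + 1) →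
      2 ^ (k + l) / ((k.factorial : ℝ) * (l.factorial : ℝ)) * ((l.factorial : ℝ) * (1 / 2) ^ l)
          * (l.factorial : ℝ)⁻¹ *
        ((Bco l k j : ℝ) * a ^ (l - j) * (b / 2) ^ (k - j)
          * ((z - b / 2 * a) ^ (k + l - j + 1))⁻¹) = 0 := by
    intro j hj hj'
    rw [mem_range] at hj hj'
    have hlj : l < j := by omega
    have : Bco l k j = 0 := by
      unfold Bco
      rw [Nat.descFactorial_eq_zero_iff_lt.2 hlj]
      ring
    rw [this]
    simp
  rw [← Finset.sum_subset hsub hzero]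
  refine Finset.sum_congr rfl (fun j hj => ?_)
  rw [mem_range] at hj
  have hjk : j ≤ k := by omega
  have hjl : j ≤ l := by omega
  have hbase : z - b / 2 * a = z - a * b / 2 := by ring
  have hU : z - a * b / 2 ≠ 0 := by rw [← hbase]; exact hza
  have hUp : ((z - a * b / 2) ^ (k + l - j + 1)) ≠ 0 := pow_ne_zero _ hU
  have hdf : ((l - j).factorial : ℝ) * (l.descFactorial j : ℝ) = (l.factorial : ℝ) := by
    exact_mod_cast congrArg (Nat.cast (R := ℝ)) (Nat.factorial_mul_descFactorial hjl)
  have hdf' : (l.descFactorial j : ℝ) = (l.factorial : ℝ) / ((l - j).factorial : ℝ) := by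
    field_simp [Nat.cast_ne_zero.2 (l - j).factorial_ne_zero]
    linarith [hdf]
  have h2 : (2 : ℝ) ^ (k + l) = 2 ^ j * 2 ^ l * 2 ^ (k - j) := by
    rw [← pow_add, ← pow_add]
    congr 1
    omega
  rw [hbase]
  generalize ((z - a * b / 2) ^ (k + l - j + 1))⁻¹ = V
  unfold Bco
  push_cast [Nat.cast_choose ℝ hjk, hdf']
  rw [h2]
  have hk : (k.factorial : ℝ) ≠ 0 := Nat.cast_ne_zero.2 k.factorial_ne_zero
  have hkj : ((k - j).factorial : ℝ) ≠ 0 := Nat.cast_ne_zero.2 (k - j).factorial_ne_zero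
  have hlj : ((l - j).factorial : ℝ) ≠ 0 := Nat.cast_ne_zero.2 (l - j).factorial_ne_zero
  have hjf : (j.factorial : ℝ) ≠ 0 := Nat.cast_ne_zero.2 j.factorial_ne_zero
  field_simp
  simp only [one_div, inv_pow]
  field_simp
  rw [div_pow]
  field_simp
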